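/- If F and G are two C¹ strictly convex functions on a convex open set U ⊆ ℝ^d, then the Bregman divergences φ_F and φ_G coincide on U × U if and only if there exist α ∈ ℝ^d and β ∈ ℝ such that F(ξ) - G(ξ) = ⟨α, ξ⟩ + β for all ξ ∈ U. -/

import Mathlib

open scoped InnerProductSpace

noncomputable def bregman {d : ℕ} (F : EuclideanSpace ℝ (Fin d) → ℝ)
    (f : EuclideanSpace ℝ (Fin d) → EuclideanSpace ℝ (Fin d))
    (ξ x : EuclideanSpace ℝ (Fin d)) : ℝ :=
  F ξ - F x - ⟪f x, ξ - x⟫_ℝ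

theorem stmt_1 {d : ℕ} (U : Set (EuclideanSpace ℝ (Fin d)))
    (hUopen : IsOpen U) (hUconv : Convex ℝ U) (hUne : U.Nonempty)
    (F G : EuclideanSpace ℝ (Fin d) → ℝ)
    (f g : EuclideanSpace ℝ (Fin d) → EuclideanSpace ℝ (Fin d))
    (hF : ContDiffOn ℝ 1 F U) (hG : ContDiffOn ℝ 1 G U)
    (hgradF : ∀ x ∈ U, HasGradientAt F (f x) x)
    (hgradG : ∀ x ∈ U, HasGradientAt G (g x) x)
    (hconvF : StrictConvexOn ℝ U F) (hconvG : StrictConvexOn ℝ U G) :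
    (∀ ξ ∈ U, ∀ x ∈ U, bregman F f ξ x = bregman G g ξ x) ↔
      ∃ (α : EuclideanSpace ℝ (Fin d)) (β : ℝ),
        ∀ ξ ∈ U, F ξ - G ξ = ⟪α, ξ⟫_ℝ + β := by
  constructor
  · intro h
    obtain ⟨x₀, hx₀⟩ := hUne
    refine ⟨f x₀ - g x₀, (F x₀ - G x₀) - ⟪f x₀ - g x₀, x₀⟫_ℝ, ?_⟩
    intro ξ hξ
    have := h ξ hξ x₀ hx₀
    simp only [bregman] at this
    simp only [inner_sub_left, inner_sub_right] at this ⊢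
    linarith
  · rintro ⟨α, β, hαβ⟩ ξ hξ x hx
    -- first show f x = g x + α
    have hfg : f x = g x + α := by
      have hGa : HasGradientAt (fun y => G y + (⟪α, y⟫_ℝ + β)) (g x + α) x := by
        have h1 : HasGradientAt G (g x) x := hgradG x hx
        have h2 : HasFDerivAt (fun y : EuclideanSpace ℝ (Fin d) => ⟪α, y⟫_ℝ + β)
            (innerSL ℝ α) x := ((innerSL ℝ α).hasFDerivAt).add_const β
        rw [hasGradientAt_iff_hasFDerivAt] at h1 ⊢
        have := h1.add h2
        refine this.congr_fderiv ?_
        ext v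
        simp [inner_add_left]
      have hFa : HasGradientAt F (g x + α) x := by
        refine hGa.congr_of_eventuallyEq ?_
        filter_upwards [hUopen.mem_nhds hx] with y hy
        have := hαβ y hy
        linarith
      exact (hgradF x hx).unique hFa
    simp only [bregman, hfg, hαβ ξ hξ, hαβ x hx, inner_add_left, inner_sub_right]
    have h1 := hαβ ξ hξ
    have h2 := hαβ x hx
    linarith
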